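/- Output probabilities of Cayley-perturbed shallow circuits are low-degree rational functions (Lemma 7 of the paper): with the setup of the Cayley-perturbed circuit V(θ) = E_m(θ)⋯E_1(θ) built from m two-mode gates with Cayley data (L_i, φ_{i,1}, φ_{i,2}, G_i) and denominators q_i(θ), let σ be any permutation of Fin M with permutation matrix P_σ, and let r, t : Fin N → Fin M be injections (a collision-free outcome and a collision-free input). Then there exists a real polynomial P of degree at most 4mN such that, for every real θ with q_i(θ) ≠ 0 for all i, |Per( (V(θ)·P_σ).submatrix r t )|² · ( ∏_{i=1}^{m} |q_i(θ)|² )^N = P(θ). Equivalently, the output probability p_s(V(θ)P_σ) = |Per((V(θ)P_σ)_{s,t})|² is a degree-(4mN, 4mN) rational function of θ with denominator Q(θ) = (∏_i |q_i(θ)|²)^N. -/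

import Mathlib

open Matrix

/-- The Cayley denominator `q(θ) = ∏_{j ∈ Fin 2} (1 + iθ e^{iφ_j/2} sin(φ_j/2))`
of a two-mode gate with eigenphases `φ : Fin 2 → ℝ`. -/
noncomputable def cayleyQ (φ : Fin 2 → ℝ) (θ : ℝ) : ℂ :=
  ∏ j : Fin 2, (1 + Complex.I * (θ : ℂ) * Complex.exp (Complex.I * ((φ j / 2 : ℝ) : ℂ)) *
    (Real.sin (φ j / 2) : ℂ))

/-- The Cayley numerator eigenvalue
`p_j(θ) = e^{iφ_j} (1 - iθ e^{-iφ_j/2} sin(φ_j/2)) (1 + iθ e^{iφ_{3-j}/2} sin(φ_{3-j}/2))`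
of a two-mode gate; here `j + 1 : Fin 2` is the index other than `j`. -/
noncomputable def cayleyP (φ : Fin 2 → ℝ) (j : Fin 2) (θ : ℝ) : ℂ :=
  Complex.exp (Complex.I * ((φ j : ℝ) : ℂ)) *
    (1 - Complex.I * (θ : ℂ) * Complex.exp (-Complex.I * ((φ j / 2 : ℝ) : ℂ)) *
      (Real.sin (φ j / 2) : ℂ)) *
    (1 + Complex.I * (θ : ℂ) * Complex.exp (Complex.I * ((φ (j + 1) / 2 : ℝ) : ℂ)) *
      (Real.sin (φ (j + 1) / 2) : ℂ))

/-- The Cayley transform of the `2×2` unitary `L · diag(e^{iφ_1}, e^{iφ_2}) · Lᴴ`,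
in diagonal form: `H(θ) = q(θ)⁻¹ • (L · diag(p_1(θ), p_2(θ)) · Lᴴ)`. -/
noncomputable def cayleyGate (L : Matrix (Fin 2) (Fin 2) ℂ) (φ : Fin 2 → ℝ) (θ : ℝ) :
    Matrix (Fin 2) (Fin 2) ℂ :=
  (cayleyQ φ θ)⁻¹ • (L * Matrix.diagonal (fun j => cayleyP φ j θ) * Lᴴ)

/-- The `M × M` matrix of a two-mode gate: it acts as the `2×2` matrix `A` on the two
modes `a ≠ b` and as the identity on all other modes. -/
def twoModeGate (M : ℕ) (a b : Fin M) (A : Matrix (Fin 2) (Fin 2) ℂ) :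
    Matrix (Fin M) (Fin M) ℂ := fun x y =>
  if x = a then (if y = a then A 0 0 else if y = b then A 0 1 else 0)
  else if x = b then (if y = a then A 1 0 else if y = b then A 1 1 else 0)
  else (if y = x then 1 else 0)


section Aux
open Polynomial

def PB (S : Set ℝ) (d : ℕ) (f : ℝ → ℂ) : Prop :=
  ∃ p : Polynomial ℂ, p.natDegree ≤ d ∧ ∀ θ ∈ S, f θ = p.eval (θ : ℂ)

theorem PB.congr {S d f} (h : PB S d f) {g} (hfg : ∀ θ ∈ S, g θ = f θ) : PB S d g := by
  obtain ⟨p, hp, he⟩ := h; exact ⟨p, hp, fun θ hθ => (hfg θ hθ).trans (he θ hθ)⟩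

theorem PB.mono {S d f} (h : PB S d f) {e} (hde : d ≤ e) : PB S e f := by
  obtain ⟨p, hp, he⟩ := h; exact ⟨p, hp.trans hde, he⟩

theorem PB.const (S : Set ℝ) (d : ℕ) (c : ℂ) : PB S d fun _ => c :=
  ⟨C c, by simp, by simp⟩

theorem PB.linear (S : Set ℝ) (c z : ℂ) : PB S 1 fun θ => c + z * θ :=
  ⟨C c + C z * X, (natDegree_add_le _ _).trans (max_le (by simp) ((natDegree_C_mul_le z X).trans (by simp))), by simp⟩

theorem PB.mul {S d e f g} (hf : PB S d f) (hg : PB S e g) :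
    PB S (d + e) fun θ => f θ * g θ := by
  obtain ⟨p, hp, hep⟩ := hf; obtain ⟨q, hq, heq⟩ := hg
  exact ⟨p * q, (natDegree_mul_le).trans (add_le_add hp hq),
    fun θ hθ => by simp [hep θ hθ, heq θ hθ]⟩

theorem PB.sum {S d ι} (s : Finset ι) (f : ι → ℝ → ℂ) (h : ∀ i ∈ s, PB S d (f i)) :
    PB S d fun θ => ∑ i ∈ s, f i θ := by
  classical
  induction s using Finset.cons_induction with
  | empty => simpa using PB.const S d 0
  | cons i s hi ih =>
    obtain ⟨p, hp, hep⟩ := h i (Finset.mem_cons_self i s)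
    obtain ⟨q, hq, heq⟩ := ih fun j hj => h j (Finset.mem_cons_of_mem hj)
    refine ⟨p + q, (natDegree_add_le _ _).trans (max_le hp hq), fun θ hθ => ?_⟩
    simp [Finset.sum_insert hi, hep θ hθ, heq θ hθ]

theorem PB.prodCard {S d ι} (s : Finset ι) (f : ι → ℝ → ℂ) (h : ∀ i ∈ s, PB S d (f i)) :
    PB S (d * s.card) fun θ => ∏ i ∈ s, f i θ := by
  classical
  induction s using Finset.cons_induction with
  | empty => simpa using PB.const S 0 1
  | cons i s hi ih =>
    have := (h i (Finset.mem_cons_self i s)).mul (ih fun j hj => h j (Finset.mem_cons_of_mem hj))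
    refine (this.congr fun θ hθ => by simp [Finset.prod_insert hi]).mono ?_
    simp [Finset.card_insert_of_notMem hi, Nat.mul_succ, Nat.add_comm]
theorem PB.matMul {S d e} {M' : ℕ} {A B : ℝ → Matrix (Fin M') (Fin M') ℂ}
    (hA : ∀ x y, PB S d fun θ => A θ x y) (hB : ∀ x y, PB S e fun θ => B θ x y)
    (x y : Fin M') : PB S (d + e) fun θ => (A θ * B θ) x y :=
  (PB.sum Finset.univ _ fun k _ => (hA x k).mul (hB k y)).congr
    fun θ _ => Matrix.mul_apply

theorem PB.listProd {S d ι} {M' : ℕ} (l : List ι) (A : ι → ℝ → Matrix (Fin M') (Fin M') ℂ)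
    (h : ∀ i ∈ l, ∀ x y, PB S d fun θ => A i θ x y) (x y : Fin M') :
    PB S (d * l.length) fun θ => ((l.map fun i => A i θ).prod) x y := by
  induction l generalizing x y with
  | nil =>
    simp only [List.map_nil, List.prod_nil]
    exact (PB.const S 0 (if x = y then 1 else 0)).congr fun θ _ => Matrix.one_apply
  | cons i l ih =>
    have := PB.matMul (M' := M') (hA := h i List.mem_cons_self)
      (hB := fun x y => ih (fun j hj x y => h j (List.mem_cons_of_mem i hj) x y) x y) x y
    refine (this.congr fun θ _ => by simp [List.prod_cons]).mono (by simp [Nat.mul_succ]; omega)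

theorem listProd_smul {ι} {M' : ℕ} (l : List ι) (c : ι → ℂ) (A : ι → Matrix (Fin M') (Fin M') ℂ) :
    (l.map fun i => c i • A i).prod = (l.map c).prod • (l.map A).prod := by
  induction l with
  | nil => simp
  | cons i l ih => simp [ih, smul_mul_assoc, mul_smul_comm, smul_smul, mul_comm]
theorem PB.cayP (S : Set ℝ) (φ : Fin 2 → ℝ) (j : Fin 2) : PB S 2 (cayleyP φ j) := by
  have h1 := PB.linear S 1 (-(Complex.I * Complex.exp (-Complex.I * ((φ j / 2 : ℝ) : ℂ)) *
      (Real.sin (φ j / 2) : ℂ)))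
  have h2 := PB.linear S 1 (Complex.I * Complex.exp (Complex.I * ((φ (j + 1) / 2 : ℝ) : ℂ)) *
      (Real.sin (φ (j + 1) / 2) : ℂ))
  have := ((PB.const S 0 (Complex.exp (Complex.I * ((φ j : ℝ) : ℂ)))).mul h1).mul h2
  exact this.congr fun θ _ => by unfold cayleyP; ring

theorem PB.cayQ (S : Set ℝ) (φ : Fin 2 → ℝ) : PB S 2 (cayleyQ φ) := by
  have h1 := PB.linear S 1 (Complex.I * Complex.exp (Complex.I * ((φ 0 / 2 : ℝ) : ℂ)) *
      (Real.sin (φ 0 / 2) : ℂ))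
  have h2 := PB.linear S 1 (Complex.I * Complex.exp (Complex.I * ((φ 1 / 2 : ℝ) : ℂ)) *
      (Real.sin (φ 1 / 2) : ℂ))
  exact (h1.mul h2).congr fun θ _ => by
    unfold cayleyQ; rw [Fin.prod_univ_two]; ring

theorem PB.nmat (S : Set ℝ) (L G : Matrix (Fin 2) (Fin 2) ℂ) (φ : Fin 2 → ℝ) (x y : Fin 2) :
    PB S 2 fun θ => (L * Matrix.diagonal (fun j => cayleyP φ j θ) * Lᴴ * G) x y := by
  refine (PB.sum Finset.univ _ fun k _ => ?_).congr fun θ _ => Matrix.mul_apply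
  refine (PB.sum Finset.univ (fun j θ => L x j * cayleyP φ j θ * Lᴴ j k * G k y)
    fun j _ => ?_).congr fun θ _ => ?_
  · exact (((PB.const S 0 (L x j)).mul (PB.cayP S φ j)).mul
      (PB.const S 0 (Lᴴ j k * G k y))).congr fun θ _ => by ring
  · rw [Matrix.mul_apply, Finset.sum_mul]
    congr 1; ext j; rw [Matrix.mul_diagonal]

theorem wentry {M' : ℕ} (a b : Fin M') (Nm : Matrix (Fin 2) (Fin 2) ℂ) (q : ℂ) (hq : q ≠ 0)
    (x y : Fin M') :
    (q • twoModeGate M' a b (q⁻¹ • Nm)) x y =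
      if x = a then (if y = a then Nm 0 0 else if y = b then Nm 0 1 else 0)
      else if x = b then (if y = a then Nm 1 0 else if y = b then Nm 1 1 else 0)
      else (if y = x then q else 0) := by
  simp only [Matrix.smul_apply, twoModeGate, smul_eq_mul]
  split_ifs <;> simp [mul_inv_cancel_left₀ hq]

theorem eval_map_conj (p : Polynomial ℂ) (θ : ℝ) :
    (p.map (starRingEnd ℂ)).eval (θ : ℂ) = (starRingEnd ℂ) (p.eval (θ : ℂ)) := by
  conv_lhs => rw [show ((θ : ℂ)) = (starRingEnd ℂ) (θ : ℂ) by simp [Complex.conj_ofReal]]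
  rw [Polynomial.eval_map, Polynomial.eval₂_at_apply]

theorem exists_real_poly (q : Polynomial ℂ) (n : ℕ) (h : q.natDegree ≤ n) :
    ∃ P : Polynomial ℝ, P.degree ≤ n ∧ ∀ θ : ℝ, P.eval θ = (q.eval (θ : ℂ)).re := by
  refine ⟨∑ j ∈ Finset.range (n + 1), C ((q.coeff j).re) * X ^ j, ?_, ?_⟩
  · refine (degree_sum_le _ _).trans ?_
    refine Finset.sup_le fun j hj => (degree_C_mul_X_pow_le _ _).trans ?_
    exact_mod_cast Nat.lt_succ_iff.mp (Finset.mem_range.mp hj)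
  · intro θ
    rw [eval_finset_sum, eval_eq_sum_range' (lt_of_le_of_lt h (Nat.lt_succ_self n)),
      Complex.re_sum]
    congr 1; ext j
    simp [Complex.mul_re, ← Complex.ofReal_pow]

end Aux

/-- **Output probabilities of Cayley-perturbed shallow circuits are low-degree rational
functions** (Lemma 7 of the paper).  For the Cayley-perturbed circuit
`V(θ) = E_m(θ) ⋯ E_1(θ)` built from `m` two-mode gates, any permutation `σ` of the
modes, and collision-free outcome/input injections `r, t : Fin N → Fin M`, there is a
real polynomial `P` of degree at most `4mN` with
`|Per((V(θ)·P_σ).submatrix r t)|² · (∏_i |q_i(θ)|²)^N = P(θ)` whenever all `q_i(θ) ≠ 0`;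
i.e. the output probability is a degree-`(4mN, 4mN)` rational function of `θ` with
denominator `Q(θ) = (∏_i |q_i(θ)|²)^N`. -/
theorem output_probability_rational_function (M m N : ℕ)
    (a b : Fin m → Fin M) (hab : ∀ i, a i ≠ b i)
    (G L : Fin m → Matrix (Fin 2) (Fin 2) ℂ)
    (hG : ∀ i, G i ∈ Matrix.unitaryGroup (Fin 2) ℂ)
    (hL : ∀ i, L i ∈ Matrix.unitaryGroup (Fin 2) ℂ)
    (φ : Fin m → Fin 2 → ℝ)
    (σ : Equiv.Perm (Fin M)) (r t : Fin N → Fin M)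
    (hr : Function.Injective r) (ht : Function.Injective t) :
    ∃ P : Polynomial ℝ, P.degree ≤ (4 * m * N : ℕ) ∧
      ∀ θ : ℝ, (∀ i, cayleyQ (φ i) θ ≠ 0) →
        ‖(Matrix.permanent
              (((((List.finRange m).reverse.map (fun i =>
                    twoModeGate M (a i) (b i) (cayleyGate (L i) (φ i) θ * G i))).prod) *
                  σ.permMatrix ℂ).submatrix r t))‖ ^ 2 *
          (∏ i, ‖cayleyQ (φ i) θ‖ ^ 2) ^ N = P.eval θ := by
  classical
  set S : Set ℝ := {θ | ∀ i, cayleyQ (φ i) θ ≠ 0} with hS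
  set Nmat : Fin m → ℝ → Matrix (Fin 2) (Fin 2) ℂ := fun i θ =>
    L i * Matrix.diagonal (fun j => cayleyP (φ i) j θ) * (L i)ᴴ * G i with hNmat
  set W : Fin m → ℝ → Matrix (Fin M) (Fin M) ℂ := fun i θ =>
    cayleyQ (φ i) θ • twoModeGate M (a i) (b i) (cayleyGate (L i) (φ i) θ * G i) with hW
  -- the two-mode factor in cleared form
  have hgate : ∀ i θ, cayleyGate (L i) (φ i) θ * G i = (cayleyQ (φ i) θ)⁻¹ • Nmat i θ := by
    intro i θ
    rw [hNmat]; unfold cayleyGate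
    rw [Matrix.smul_mul]
  have hWentry : ∀ i, ∀ θ ∈ S, ∀ x y, W i θ x y =
      (if x = a i then (if y = a i then Nmat i θ 0 0 else if y = b i then Nmat i θ 0 1 else 0)
      else if x = b i then (if y = a i then Nmat i θ 1 0 else if y = b i then Nmat i θ 1 1 else 0)
      else (if y = x then cayleyQ (φ i) θ else 0)) := by
    intro i θ hθ x y
    rw [hW]; simp only []
    rw [hgate i θ]
    exact wentry (a i) (b i) (Nmat i θ) _ (hθ i) x y
  -- entries of W are degree-2 polynomial on S
  have hWPB : ∀ i x y, PB S 2 fun θ => W i θ x y := by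
    intro i x y
    refine PB.congr ?_ fun θ hθ => hWentry i θ hθ x y
    by_cases hxa : x = a i
    · simp only [if_pos hxa]
      by_cases hya : y = a i
      · simpa [hya] using PB.nmat S (L i) (G i) (φ i) 0 0
      · by_cases hyb : y = b i
        · simpa [hya, hyb, Ne.symm (hab i)] using PB.nmat S (L i) (G i) (φ i) 0 1
        · simpa [hya, hyb] using PB.const S 2 0
    · by_cases hxb : x = b i
      · simp only [if_neg hxa, if_pos hxb]
        by_cases hya : y = a i
        · simpa [hya] using PB.nmat S (L i) (G i) (φ i) 1 0
        · by_cases hyb : y = b i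
          · simpa [hya, hyb, Ne.symm (hab i)] using PB.nmat S (L i) (G i) (φ i) 1 1
          · simpa [hya, hyb] using PB.const S 2 0
      · simp only [if_neg hxa, if_neg hxb]
        by_cases hyx : y = x
        · simpa [hyx] using (PB.cayQ S (φ i)).mono (by norm_num)
        · simpa [hyx] using PB.const S 2 0
  -- entries of the full W-circuit (including the permutation matrix)
  set Vbig : ℝ → Matrix (Fin M) (Fin M) ℂ := fun θ =>
    ((List.finRange m).reverse.map fun i => W i θ).prod * σ.permMatrix ℂ with hVbig
  have hVPB : ∀ x y, PB S (2 * m) fun θ => Vbig θ x y := by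
    intro x y
    have hprod := PB.listProd (S := S) (d := 2) ((List.finRange m).reverse) W
      (fun i _ x y => hWPB i x y)
    have hperm : ∀ x y, PB S 0 fun _ : ℝ => σ.permMatrix ℂ x y :=
      fun x y => PB.const S 0 _
    have := PB.matMul (S := S) (A := fun θ => ((List.finRange m).reverse.map fun i => W i θ).prod)
      (B := fun _ => σ.permMatrix ℂ) (fun x y => by simpa using hprod x y) hperm x y
    simpa [hVbig, List.map_reverse] using this
  -- the cleared permanent is a polynomial of degree ≤ 2mN on S
  have hFPB : PB S (2 * m * N) fun θ => ((Vbig θ).submatrix r t).permanent := by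
    refine PB.congr (PB.sum Finset.univ
      (fun (τ : Equiv.Perm (Fin N)) θ => ∏ i, Vbig θ (r (τ i)) (t i)) fun τ _ => ?_)
      fun θ _ => ?_
    · have := PB.prodCard (S := S) Finset.univ (fun i θ => Vbig θ (r (τ i)) (t i))
        (fun i _ => hVPB (r (τ i)) (t i))
      simpa using this
    · simp [Matrix.permanent, Matrix.submatrix_apply]
  obtain ⟨p, hpdeg, hpeval⟩ := hFPB
  -- real polynomial for |p|²
  obtain ⟨P, hPdeg, hPeval⟩ := exists_real_poly (p * p.map (starRingEnd ℂ)) (4 * m * N)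
    ((Polynomial.natDegree_mul_le).trans (by
      have h2 : (p.map (starRingEnd ℂ)).natDegree ≤ p.natDegree :=
        Polynomial.natDegree_map_le
      calc p.natDegree + (p.map (starRingEnd ℂ)).natDegree
          ≤ 2 * m * N + 2 * m * N := add_le_add hpdeg (h2.trans hpdeg)
        _ = 4 * m * N := by ring))
  refine ⟨P, hPdeg, fun θ hθ => ?_⟩
  have hθS : θ ∈ S := hθ
  -- relate Vbig to the statement's matrix
  set Q : ℂ := ∏ i, cayleyQ (φ i) θ with hQ
  have hsplit : Vbig θ = Q • ((((List.finRange m).reverse.map (fun i =>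
      twoModeGate M (a i) (b i) (cayleyGate (L i) (φ i) θ * G i))).prod) * σ.permMatrix ℂ) := by
    rw [hVbig]; simp only []
    rw [show ((List.finRange m).reverse.map fun i => W i θ) =
        (List.finRange m).reverse.map fun i => (cayleyQ (φ i) θ) •
          twoModeGate M (a i) (b i) (cayleyGate (L i) (φ i) θ * G i) from rfl,
      listProd_smul, Matrix.smul_mul]
    congr 1
    rw [List.map_reverse, List.prod_reverse, ← Fin.prod_univ_def]
  have hper : ((Vbig θ).submatrix r t).permanent =
      Q ^ N * (((((List.finRange m).reverse.map (fun i =>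
        twoModeGate M (a i) (b i) (cayleyGate (L i) (φ i) θ * G i))).prod) *
        σ.permMatrix ℂ).submatrix r t).permanent := by
    rw [hsplit]
    rw [show ((Q • ((((List.finRange m).reverse.map (fun i =>
        twoModeGate M (a i) (b i) (cayleyGate (L i) (φ i) θ * G i))).prod) *
        σ.permMatrix ℂ)).submatrix r t) = Q • (((((List.finRange m).reverse.map (fun i =>
        twoModeGate M (a i) (b i) (cayleyGate (L i) (φ i) θ * G i))).prod) *
        σ.permMatrix ℂ).submatrix r t) from rfl, Matrix.permanent_smul]
    simp
  have hFeq := hpeval θ hθS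
  simp only [] at hFeq
  rw [hper] at hFeq
  have habsQ : (∏ i, ‖cayleyQ (φ i) θ‖ ^ 2) = ‖Q‖ ^ 2 := by
    rw [Finset.prod_pow, hQ, norm_prod]
  rw [habsQ, hPeval θ, Polynomial.eval_mul, eval_map_conj, Complex.mul_conj,
    Complex.ofReal_re, ← hFeq, map_mul Complex.normSq, map_pow Complex.normSq,
    ← Complex.sq_norm Q, ← Complex.sq_norm]
  ring
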